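/- Let G be a group and L ⊆ A* a biautomatic structure for a surjective monoid homomorphism π : A* → G. Then Pref(L), the language of all prefixes of words of L, is also a biautomatic structure for π. -/

import Mathlib

open scoped NNReal

namespace Auto

/-- The generating set `Aπ ∪ (Aπ)⁻¹` of `G` determined by `π : A* → G`. -/
def gens {A G : Type*} [Group G] (π : FreeMonoid A →* G) : Set G :=
  (Set.range fun a : A => π (FreeMonoid.of a)) ∪
    Set.range fun a : A => (π (FreeMonoid.of a))⁻¹

/-- The word metric `d_A` on `G`: the least `n` such that `g⁻¹h` is a product of `n`
elements of `Aπ ∪ (Aπ)⁻¹`. -/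
noncomputable def wdist {A G : Type*} [Group G] (π : FreeMonoid A →* G) (g h : G) : ℕ :=
  sInf {n : ℕ | ∃ l : List G, l.length = n ∧ (∀ x ∈ l, x ∈ gens π) ∧ l.prod = g⁻¹ * h}

/-- Evaluation of a word of `A*` in `G`. -/
def evalW {A G : Type*} [Group G] (π : FreeMonoid A →* G) (w : List A) : G :=
  π (FreeMonoid.ofList w)

/-- `u` and `v` `p`-fellow travel: `d_A(u^[n]π, v^[n]π) ≤ p` for all `n`. -/
def FellowTravel {A G : Type*} [Group G] (π : FreeMonoid A →* G) (p : ℝ≥0)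
    (u v : List A) : Prop :=
  ∀ n : ℕ, (wdist π (evalW π (u.take n)) (evalW π (v.take n)) : ℝ≥0) ≤ p

/-- `u` and `v` are `p`-meeting-fellow-travellers. -/
def MFT {A G : Type*} [Group G] (π : FreeMonoid A →* G) (p : ℝ≥0) (u v : List A) : Prop :=
  FellowTravel π p u v ∧ evalW π u = evalW π v

/-- A language is regular if it is accepted by a finite-state automaton. -/
def IsRegular {A : Type*} (L : Language A) : Prop :=
  ∃ (σ : Type) (_ : Fintype σ) (M : DFA A σ), M.accepts = L

/-- `L` is an automatic structure for `π`. -/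
structure IsAutomaticStructure {A G : Type*} [Group G] (π : FreeMonoid A →* G)
    (L : Language A) : Prop where
  regular : IsRegular L
  onto : ∀ g : G, ∃ w ∈ L, evalW π w = g
  ft : ∃ N : ℕ, ∀ u ∈ L, ∀ v ∈ L,
    wdist π (evalW π u) (evalW π v) ≤ 1 → FellowTravel π N u v

/-- Evaluation of an element of `A ∪ {ε}`. -/
def evalOpt {A G : Type*} [Group G] (π : FreeMonoid A →* G) : Option A → G
  | none => 1
  | some a => π (FreeMonoid.of a)

/-- `L` is a biautomatic structure for `π`. -/
structure IsBiautomaticStructure {A G : Type*} [Group G] (π : FreeMonoid A →* G)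
    (L : Language A) extends IsAutomaticStructure π L : Prop where
  bi : ∃ N : ℕ, ∀ u ∈ L, ∀ v ∈ L, ∀ a : Option A,
    evalW π v = evalOpt π a * evalW π u →
    ∀ n : ℕ, wdist π (evalOpt π a * evalW π (u.take n)) (evalW π (v.take n)) ≤ N

/-- A language is factorial if it is closed under taking factors. -/
def IsFactorial {A : Type*} (L : Language A) : Prop :=
  ∀ u ∈ L, ∀ v : List A, v <:+: u → v ∈ L

/-- `D : ℝ≥0 → ℝ≥0` is a departure function for `(G, L)`. -/
def IsDepartureFunction {A G : Type*} [Group G] (π : FreeMonoid A →* G) (L : Language A)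
    (D : ℝ≥0 → ℝ≥0) : Prop :=
  ∀ w ∈ L, ∀ r : ℝ≥0, ∀ s t : ℕ, D r ≤ (t : ℝ≥0) → s + t ≤ w.length →
    r < (wdist π (evalW π (w.take s)) (evalW π (w.take (s + t))) : ℝ≥0)

/-- Every point of `S` is within distance `N` of `T`. -/
def NbhdIn {A G : Type*} [Group G] (π : FreeMonoid A →* G) (N : ℕ) (S T : Set G) : Prop :=
  ∀ s ∈ S, ∃ t ∈ T, wdist π s t ≤ N

/-- The Hausdorff distance between `S` and `T` is at most `N`. -/
def HausdorffLE {A G : Type*} [Group G] (π : FreeMonoid A →* G) (N : ℕ)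
    (S T : Set G) : Prop :=
  NbhdIn π N S T ∧ NbhdIn π N T S

/-- `H` is an `L`-quasiconvex subgroup of `G`. -/
def IsQuasiconvex {A G : Type*} [Group G] (π : FreeMonoid A →* G) (L : Language A)
    (H : Subgroup G) : Prop :=
  ∃ k : ℕ, ∀ h ∈ H, ∀ h' ∈ H, ∀ w ∈ L, h * evalW π w = h' →
    ∀ n : ℕ, ∃ z ∈ H, wdist π (h * evalW π (w.take n)) z ≤ k

/-- The bounded reduction property for `(φ, L, L')`. -/
def BRP {A B G G' : Type*} [Group G] [Group G'] (π : FreeMonoid A →* G)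
    (π' : FreeMonoid B →* G') (φ : G →* G') (L : Language A) (L' : Language B) : Prop :=
  ∃ N : ℕ, ∀ x : G, ∀ α ∈ L, ∀ β ∈ L', evalW π' β = φ (evalW π α) →
    HausdorffLE π' N (Set.range fun n : ℕ => φ (x * evalW π (α.take n)))
      (Set.range fun n : ℕ => φ x * evalW π' (β.take n))

/-- The synchronous bounded reduction property for `(φ, L, L')`. -/
def SyncBRP {A B G G' : Type*} [Group G] [Group G'] (π : FreeMonoid A →* G)
    (π' : FreeMonoid B →* G') (φ : G →* G') (L : Language A) (L' : Language B) : Prop :=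
  ∃ N : ℕ, ∀ x : G, ∀ α ∈ L, ∀ β ∈ L', evalW π' β = φ (evalW π α) →
    ∀ n : ℕ, wdist π' (φ (x * evalW π (α.take n))) (φ x * evalW π' (β.take n)) ≤ N

/-- The fellow traveller bounded reduction property (FT-BRP) for `(φ, L, L')`. -/
def FTBRP {A B G G' : Type*} [Group G] [Group G'] (π : FreeMonoid A →* G)
    (π' : FreeMonoid B →* G') (φ : G →* G') (L : Language A) (L' : Language B) : Prop :=
  ∀ p : ℝ≥0, ∃ q : ℝ≥0,
    ∀ u₁ ∈ L, ∀ u₂ ∈ L, ∀ u₃ ∈ L, ∀ u₁' ∈ L', ∀ u₂' ∈ L', ∀ u₃' ∈ L',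
      evalW π' u₁' = φ (evalW π u₁) → evalW π' u₂' = φ (evalW π u₂) →
        evalW π' u₃' = φ (evalW π u₃) →
          MFT π p (u₁ ++ u₂) u₃ → MFT π' q (u₁' ++ u₂') u₃'

/-- The natural homomorphism `(A ⊔ B)* → G` agreeing with `π₁` on `A` and `π₂` on `B`. -/
def sumHom {A B G : Type*} [Group G] (π₁ : FreeMonoid A →* G) (π₂ : FreeMonoid B →* G) :
    FreeMonoid (A ⊕ B) →* G :=
  FreeMonoid.lift (Sum.elim (fun a => π₁ (FreeMonoid.of a)) fun b => π₂ (FreeMonoid.of b))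

/-- The union `L₁ ∪ L₂` viewed as a language over `A ⊔ B`. -/
def unionLang {A B : Type*} (L₁ : Language A) (L₂ : Language B) : Language (A ⊕ B) :=
  {w : List (A ⊕ B) | (∃ u ∈ L₁, w = u.map Sum.inl) ∨ ∃ v ∈ L₂, w = v.map Sum.inr}

/-- `L` is an asynchronous automatic structure for `π`. -/
def IsAsyncAutomaticStructure {A G : Type*} [Group G] (π : FreeMonoid A →* G)
    (L : Language A) : Prop :=
  IsRegular L ∧ (∀ g : G, ∃ w ∈ L, evalW π w = g) ∧
    ∃ p : ℕ, ∀ u ∈ L, ∀ v ∈ L, wdist π (evalW π u) (evalW π v) ≤ 1 →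
      ∃ φ ψ : ℕ → ℕ, Monotone φ ∧ Monotone ψ ∧
        Function.Surjective φ ∧ Function.Surjective ψ ∧
          ∀ t : ℕ, wdist π (evalW π (u.take (φ t))) (evalW π (v.take (ψ t))) ≤ p

/-- `L₁` and `L₂` are equivalent automatic structures. -/
def LangEquivalent {A B G : Type*} [Group G] (π₁ : FreeMonoid A →* G)
    (π₂ : FreeMonoid B →* G) (L₁ : Language A) (L₂ : Language B) : Prop :=
  IsAsyncAutomaticStructure (sumHom π₁ π₂) (unionLang L₁ L₂)

/-- `L₁` and `L₂` are synchronously equivalent automatic structures. -/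
def LangSyncEquivalent {A B G : Type*} [Group G] (π₁ : FreeMonoid A →* G)
    (π₂ : FreeMonoid B →* G) (L₁ : Language A) (L₂ : Language B) : Prop :=
  IsAutomaticStructure (sumHom π₁ π₂) (unionLang L₁ L₂)

/-- `L` has the Hausdorff closeness property. -/
def HausClose {A G : Type*} [Group G] (π : FreeMonoid A →* G) (L : Language A) : Prop :=
  ∃ N : ℕ, ∀ u ∈ L, ∀ v ∈ L, wdist π (evalW π u) (evalW π v) ≤ 1 →
    HausdorffLE π N (Set.range fun n : ℕ => evalW π (u.take n))
      (Set.range fun n : ℕ => evalW π (v.take n))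

/-- The padded alphabet `C = (A×B) ∪ (A×{$}) ∪ ({$}×B)` of convolution. -/
abbrev ConvAlphabet (A B : Type*) := (A × B) ⊕ (A ⊕ B)

/-- The convolution `u ⋄ v` of two words. -/
def conv {A B : Type*} : List A → List B → List (ConvAlphabet A B)
  | [], [] => []
  | [], b :: v => Sum.inr (Sum.inr b) :: conv [] v
  | a :: u, [] => Sum.inr (Sum.inl a) :: conv u []
  | a :: u, b :: v => Sum.inl (a, b) :: conv u v
  termination_by u v => u.length + v.length

/-- The convolution `L₁ ⋄ L₂` of two languages. -/
def convLang {A B : Type*} (L₁ : Language A) (L₂ : Language B) :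
    Language (ConvAlphabet A B) :=
  {w : List (ConvAlphabet A B) | ∃ u ∈ L₁, ∃ v ∈ L₂, w = conv u v}

/-- The natural homomorphism `C* → G × G'` for the convolution alphabet. -/
def convHom {A B G G' : Type*} [Group G] [Group G'] (π₁ : FreeMonoid A →* G)
    (π₂ : FreeMonoid B →* G') : FreeMonoid (ConvAlphabet A B) →* G × G' :=
  FreeMonoid.lift fun c =>
    match c with
    | Sum.inl (a, b) => (π₁ (FreeMonoid.of a), π₂ (FreeMonoid.of b))
    | Sum.inr (Sum.inl a) => (π₁ (FreeMonoid.of a), 1)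
    | Sum.inr (Sum.inr b) => (1, π₂ (FreeMonoid.of b))

/-- A group is automatic if it admits an automatic structure over some finite alphabet. -/
def IsAutomaticGroup (G : Type*) [Group G] : Prop :=
  ∃ (A : Type) (_ : Fintype A) (π : FreeMonoid A →* G) (L : Language A),
    IsAutomaticStructure π L

end Auto

open Auto


section PrefBiautoAux

variable {A G : Type*} [Group G] {π : FreeMonoid A →* G}

private theorem evalW_nil' : evalW π [] = 1 := by simp [evalW]

private theorem evalW_append' (u v : List A) :
    evalW π (u ++ v) = evalW π u * evalW π v := by simp [evalW]

private theorem evalW_cons' (a : A) (u : List A) :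
    evalW π (a :: u) = π (FreeMonoid.of a) * evalW π u := by simp [evalW]

private theorem gens_inv' {c : G} (hc : c ∈ gens π) : c⁻¹ ∈ gens π := by
  rcases hc with ⟨a, rfl⟩ | ⟨a, rfl⟩
  · exact Or.inr ⟨a, rfl⟩
  · exact Or.inl ⟨a, by simp⟩

private theorem exists_gens_list (y : List A) :
    ∃ l : List G, l.length = y.length ∧ (∀ x ∈ l, x ∈ gens π) ∧ l.prod = evalW π y := by
  induction y with
  | nil => exact ⟨[], rfl, by simp, by simp [evalW]⟩
  | cons a y ih =>
    obtain ⟨l, hlen, hmem, hprod⟩ := ih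
    refine ⟨π (FreeMonoid.of a) :: l, by simp [hlen], ?_, by simp [hprod, evalW_cons']⟩
    intro x hx
    rcases List.mem_cons.mp hx with rfl | hx
    · exact Or.inl ⟨a, rfl⟩
    · exact hmem x hx

private theorem wdist_nonempty (hπ : Function.Surjective π) (g h : G) :
    {n : ℕ | ∃ l : List G, l.length = n ∧ (∀ x ∈ l, x ∈ gens π) ∧
      l.prod = g⁻¹ * h}.Nonempty := by
  obtain ⟨w, hw⟩ := hπ (g⁻¹ * h)
  obtain ⟨l, hlen, hmem, hprod⟩ := exists_gens_list (π := π) (FreeMonoid.toList w)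
  exact ⟨l.length, l, rfl, hmem, by rw [hprod]; simpa [evalW] using hw⟩

private theorem wdist_le' {g h : G} {l : List G} (hmem : ∀ x ∈ l, x ∈ gens π)
    (hprod : l.prod = g⁻¹ * h) : wdist π g h ≤ l.length :=
  Nat.sInf_le ⟨l, rfl, hmem, hprod⟩

private theorem wdist_exists (hπ : Function.Surjective π) (g h : G) :
    ∃ l : List G, l.length = wdist π g h ∧ (∀ x ∈ l, x ∈ gens π) ∧ l.prod = g⁻¹ * h :=
  Nat.sInf_mem (wdist_nonempty hπ g h)

private theorem wdist_self' (g : G) : wdist π g g = 0 :=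
  Nat.le_zero.mp
    (by simpa using wdist_le' (g := g) (h := g) (l := []) (by simp) (by simp))

private theorem wdist_symm_le (hπ : Function.Surjective π) (g h : G) :
    wdist π h g ≤ wdist π g h := by
  obtain ⟨l, hlen, hmem, hprod⟩ := wdist_exists hπ g h
  refine le_trans (wdist_le' (l := (l.reverse.map (·⁻¹))) ?_ ?_) (by simp [hlen])
  · intro x hx
    simp only [List.mem_map, List.mem_reverse] at hx
    obtain ⟨c, hc, rfl⟩ := hx
    exact gens_inv' (hmem c hc)
  · rw [List.map_reverse, ← List.prod_inv_reverse, hprod]; simp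

private theorem wdist_symm (hπ : Function.Surjective π) (g h : G) :
    wdist π g h = wdist π h g :=
  le_antisymm (wdist_symm_le hπ h g) (wdist_symm_le hπ g h)

private theorem wdist_triangle (hπ : Function.Surjective π) (g k h : G) :
    wdist π g h ≤ wdist π g k + wdist π k h := by
  obtain ⟨l₁, hl₁, hm₁, hp₁⟩ := wdist_exists hπ g k
  obtain ⟨l₂, hl₂, hm₂, hp₂⟩ := wdist_exists hπ k h
  refine le_trans (wdist_le' (l := l₁ ++ l₂) ?_ ?_) (by simp [hl₁, hl₂])
  · intro x hx
    rcases List.mem_append.mp hx with h | h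
    · exact hm₁ x h
    · exact hm₂ x h
  · rw [List.prod_append, hp₁, hp₂]; group

private theorem wdist_left_mul (x g h : G) : wdist π (x * g) (x * h) = wdist π g h := by
  unfold wdist
  congr 1
  ext n
  simp [mul_assoc]

private theorem wdist_mul_right_le (g : G) (y : List A) :
    wdist π g (g * evalW π y) ≤ y.length := by
  obtain ⟨l, hlen, hmem, hprod⟩ := exists_gens_list (π := π) y
  exact le_trans (wdist_le' hmem (by rw [hprod]; group)) (le_of_eq hlen)

private theorem short_witness_aux {σ : Type*} [Fintype σ] (M : DFA A σ) (s : σ) :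
    ∀ n (y : List A), y.length ≤ n → M.evalFrom s y ∈ M.accept →
      ∃ y', y'.length ≤ Fintype.card σ ∧ M.evalFrom s y' ∈ M.accept := by
  intro n
  induction n with
  | zero =>
    intro y h hy
    exact ⟨y, le_trans h (Nat.zero_le _), hy⟩
  | succ n ih =>
    intro y h hy
    by_cases hle : y.length ≤ Fintype.card σ
    · exact ⟨y, hle, hy⟩
    · push_neg at hle
      obtain ⟨q, a, b, c, hsplit, hab, hb, ha, hbq, hc⟩ :=
        M.evalFrom_split (x := y) (s := s) (t := M.evalFrom s y) (le_of_lt hle) rfl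
      have hlen : (a ++ c).length ≤ n := by
        have hb1 : 1 ≤ b.length := List.length_pos_iff.mpr hb
        have := congrArg List.length hsplit
        simp only [List.length_append] at this ⊢
        omega
      refine ih (a ++ c) hlen ?_
      rw [DFA.evalFrom_of_append, ha, hc]
      exact hy

private theorem short_witness {σ : Type*} [Fintype σ] (M : DFA A σ) (s : σ) (y : List A)
    (hy : M.evalFrom s y ∈ M.accept) :
    ∃ y', y'.length ≤ Fintype.card σ ∧ M.evalFrom s y' ∈ M.accept :=
  short_witness_aux M s y.length y le_rfl hy

private theorem pref_regular {L : Language A} (h : Auto.IsRegular L) :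
    Auto.IsRegular {w : List A | ∃ v ∈ L, w <+: v} := by
  obtain ⟨σ, fin, M, hM⟩ := h
  refine ⟨σ, fin, ⟨M.step, M.start, {s | ∃ y, M.evalFrom s y ∈ M.accept}⟩, ?_⟩
  ext w
  constructor
  · rintro ⟨y, hy⟩
    refine ⟨w ++ y, ?_, y, rfl⟩
    rw [← hM]
    show M.evalFrom M.start (w ++ y) ∈ M.accept
    rw [DFA.evalFrom_of_append]
    exact hy
  · rintro ⟨v, hv, y, rfl⟩
    rw [← hM] at hv
    refine ⟨y, ?_⟩
    have h2 : M.evalFrom M.start (w ++ y) ∈ M.accept := hv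
    rwa [DFA.evalFrom_of_append] at h2

private theorem chainFT (hπ : Function.Surjective π) {L : Language A}
    (onto : ∀ g : G, ∃ w ∈ L, evalW π w = g) {N : ℕ}
    (hft : ∀ u ∈ L, ∀ v ∈ L, wdist π (evalW π u) (evalW π v) ≤ 1 →
      FellowTravel π N u v) :
    ∀ l : List G, (∀ x ∈ l, x ∈ gens π) → ∀ u ∈ L, ∀ v ∈ L,
      evalW π v = evalW π u * l.prod →
      ∀ n, wdist π (evalW π (u.take n)) (evalW π (v.take n)) ≤ (l.length + 1) * N := by
  intro l
  induction l with
  | nil =>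
    intro _ u hu v hv hprod n
    have h0 : wdist π (evalW π u) (evalW π v) ≤ 1 := by
      simp only [List.prod_nil, mul_one] at hprod
      rw [hprod, wdist_self']
      omega
    have := Nat.cast_le.mp (hft u hu v hv h0 n)
    simpa using this
  | cons c l ih =>
    intro hmem u hu v hv hprod n
    obtain ⟨r, hr, hrval⟩ := onto (evalW π u * c)
    have h1 : wdist π (evalW π u) (evalW π r) ≤ 1 := by
      refine le_trans (wdist_le' (l := [c]) ?_ ?_) (by simp)
      · intro x hx
        simp only [List.mem_singleton] at hx
        exact hx ▸ hmem c List.mem_cons_self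
      · rw [hrval]; simp
    have d1 : wdist π (evalW π (u.take n)) (evalW π (r.take n)) ≤ N :=
      Nat.cast_le.mp (hft u hu r hr h1 n)
    have d2 := ih (fun x hx => hmem x (List.mem_cons_of_mem c hx)) r hr v hv
      (by rw [hprod, hrval, List.prod_cons, mul_assoc]) n
    calc wdist π (evalW π (u.take n)) (evalW π (v.take n))
        ≤ wdist π (evalW π (u.take n)) (evalW π (r.take n)) +
          wdist π (evalW π (r.take n)) (evalW π (v.take n)) := wdist_triangle hπ _ _ _
      _ ≤ N + (l.length + 1) * N := Nat.add_le_add d1 d2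
      _ = ((c :: l).length + 1) * N := by simp [List.length_cons]; ring

private theorem chainFT' (hπ : Function.Surjective π) {L : Language A}
    (onto : ∀ g : G, ∃ w ∈ L, evalW π w = g) {N : ℕ}
    (hft : ∀ u ∈ L, ∀ v ∈ L, wdist π (evalW π u) (evalW π v) ≤ 1 →
      FellowTravel π N u v)
    {u v : List A} (hu : u ∈ L) (hv : v ∈ L) {k : ℕ}
    (hd : wdist π (evalW π u) (evalW π v) ≤ k) :
    ∀ n, wdist π (evalW π (u.take n)) (evalW π (v.take n)) ≤ (k + 1) * N := by
  obtain ⟨lw, hlen, hmem, hprodw⟩ := wdist_exists hπ (evalW π u) (evalW π v)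
  intro n
  have h := chainFT hπ onto hft lw hmem u hu v hv (by rw [hprodw]; group) n
  refine le_trans h (Nat.mul_le_mul_right _ ?_)
  omega

private theorem key_lemma (hπ : Function.Surjective π) {L : Language A}
    (hreg : Auto.IsRegular L) (onto : ∀ g : G, ∃ w ∈ L, evalW π w = g) {N : ℕ}
    (hft : ∀ u ∈ L, ∀ v ∈ L, wdist π (evalW π u) (evalW π v) ≤ 1 →
      FellowTravel π N u v) :
    ∃ K : ℕ, ∀ u y : List A, (u ++ y) ∈ L → ∀ w ∈ L, evalW π w = evalW π u →
      ∀ n, wdist π (evalW π (w.take n)) (evalW π (u.take n)) ≤ K := by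
  obtain ⟨σ, fin, M, hM⟩ := hreg
  refine ⟨(Fintype.card σ + 1) * N + Fintype.card σ, ?_⟩
  intro u y huy w hw hwu n
  have hacc : M.evalFrom (M.evalFrom M.start u) y ∈ M.accept := by
    rw [← DFA.evalFrom_of_append]
    have h2 : (u ++ y) ∈ M.accepts := by rw [hM]; exact huy
    exact h2
  obtain ⟨y', hy'len, hy'acc⟩ := short_witness M _ y hacc
  have hw0 : (u ++ y') ∈ L := by
    rw [← hM]
    show M.evalFrom M.start (u ++ y') ∈ M.accept
    rw [DFA.evalFrom_of_append]
    exact hy'acc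
  have hdist : wdist π (evalW π w) (evalW π (u ++ y')) ≤ Fintype.card σ := by
    rw [evalW_append', ← hwu]
    exact le_trans (wdist_mul_right_le _ _) hy'len
  have d1 := chainFT' hπ onto hft hw hw0 hdist n
  have d2 : wdist π (evalW π ((u ++ y').take n)) (evalW π (u.take n)) ≤
      Fintype.card σ := by
    rw [List.take_append, evalW_append', wdist_symm hπ]
    refine le_trans (wdist_mul_right_le _ _) ?_
    simp only [List.length_take]
    exact le_trans (min_le_right _ _) hy'len
  calc wdist π (evalW π (w.take n)) (evalW π (u.take n))
      ≤ wdist π (evalW π (w.take n)) (evalW π ((u ++ y').take n)) +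
        wdist π (evalW π ((u ++ y').take n)) (evalW π (u.take n)) :=
        wdist_triangle hπ _ _ _
    _ ≤ (Fintype.card σ + 1) * N + Fintype.card σ := Nat.add_le_add d1 d2

end PrefBiautoAux

/-- If `L` is a biautomatic structure for a surjective `π : A* → G`,
then `Pref(L)` is also a biautomatic structure for `π`. -/
theorem pref_biautomatic {A G : Type*} [Fintype A] [Group G]
    (π : FreeMonoid A →* G) (hπ : Function.Surjective π)
    (L : Language A) (hL : IsBiautomaticStructure π L) :
    IsBiautomaticStructure π {w : List A | ∃ v ∈ L, w <+: v} := by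
  obtain ⟨Nf, hft⟩ := hL.ft
  obtain ⟨Nb, hbi⟩ := hL.bi
  have onto := hL.onto
  obtain ⟨K, hK⟩ := key_lemma hπ hL.regular onto hft
  refine ⟨⟨pref_regular hL.regular, ?_, ⟨K + Nf + K, ?_⟩⟩, ⟨K + Nb + K, ?_⟩⟩
  · intro g
    obtain ⟨w, hw, hwg⟩ := onto g
    exact ⟨w, ⟨w, hw, List.prefix_refl w⟩, hwg⟩
  · rintro u ⟨uu, huuL, tu, htu⟩ v ⟨vv, hvvL, tv, htv⟩ hd1 n
    obtain ⟨w, hwL, hwval⟩ := onto (evalW π u)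
    obtain ⟨z, hzL, hzval⟩ := onto (evalW π v)
    have dwz : wdist π (evalW π w) (evalW π z) ≤ 1 := by rw [hwval, hzval]; exact hd1
    have hwn : wdist π (evalW π (w.take n)) (evalW π (z.take n)) ≤ Nf :=
      Nat.cast_le.mp (hft w hwL z hzL dwz n)
    have hKu := hK u tu (htu ▸ huuL) w hwL hwval n
    have hKv := hK v tv (htv ▸ hvvL) z hzL hzval n
    have : wdist π (evalW π (u.take n)) (evalW π (v.take n)) ≤ K + Nf + K := by
      calc wdist π (evalW π (u.take n)) (evalW π (v.take n))
          ≤ wdist π (evalW π (u.take n)) (evalW π (w.take n)) +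
            wdist π (evalW π (w.take n)) (evalW π (v.take n)) := wdist_triangle hπ _ _ _
        _ ≤ wdist π (evalW π (u.take n)) (evalW π (w.take n)) +
            (wdist π (evalW π (w.take n)) (evalW π (z.take n)) +
              wdist π (evalW π (z.take n)) (evalW π (v.take n))) :=
            Nat.add_le_add le_rfl (wdist_triangle hπ _ _ _)
        _ ≤ K + (Nf + K) := by
            refine Nat.add_le_add ?_ (Nat.add_le_add hwn ?_)
            · rw [wdist_symm hπ]; exact hKu
            · exact hKv
        _ = K + Nf + K := by ring
    exact_mod_cast Nat.cast_le.mpr this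
  · rintro u ⟨uu, huuL, tu, htu⟩ v ⟨vv, hvvL, tv, htv⟩ a hval n
    obtain ⟨w, hwL, hwval⟩ := onto (evalW π u)
    obtain ⟨z, hzL, hzval⟩ := onto (evalW π v)
    have hmid := hbi w hwL z hzL a (by rw [hwval, hzval]; exact hval) n
    have hKu := hK u tu (htu ▸ huuL) w hwL hwval n
    have hKv := hK v tv (htv ▸ hvvL) z hzL hzval n
    calc wdist π (evalOpt π a * evalW π (u.take n)) (evalW π (v.take n))
        ≤ wdist π (evalOpt π a * evalW π (u.take n)) (evalOpt π a * evalW π (w.take n)) +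
          wdist π (evalOpt π a * evalW π (w.take n)) (evalW π (v.take n)) :=
          wdist_triangle hπ _ _ _
      _ ≤ wdist π (evalOpt π a * evalW π (u.take n)) (evalOpt π a * evalW π (w.take n)) +
          (wdist π (evalOpt π a * evalW π (w.take n)) (evalW π (z.take n)) +
            wdist π (evalW π (z.take n)) (evalW π (v.take n))) :=
          Nat.add_le_add le_rfl (wdist_triangle hπ _ _ _)
      _ ≤ K + (Nb + K) := by
          refine Nat.add_le_add ?_ (Nat.add_le_add hmid hKv)
          rw [wdist_left_mul, wdist_symm hπ]
          exact hKu
      _ = K + Nb + K := by ring
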